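/- Under the assumption that every row standard deviation σ_i(X) is positive, the map X ↦ LayerNorm(X) is Fréchet differentiable at X, and its derivative in an arbitrary direction V ∈ ℝ^{m×n} is D LayerNorm(X)[V] = P(X)·(V·C) − P(X)·diag(δ(V))·P(X)·M(X), where δ(V) ∈ ℝ^m is the vector with entries δ(V)_i = (1/(n·σ_i(X)))·Σ_{j=1}^n M(X)_{i,j}·(V·C)_{i,j}. -/

import Mathlib

noncomputable section

open Matrix

attribute [local instance] Matrix.frobeniusNormedAddCommGroup Matrix.frobeniusNormedSpace

/-- Frobenius norm of a real matrix. -/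
def frob {m n : ℕ} (A : Matrix (Fin m) (Fin n) ℝ) : ℝ :=
  Real.sqrt (∑ i, ∑ j, A i j ^ 2)

/-- Spectral norm (largest singular value) of a real matrix: the operator norm of the
associated linear map between Euclidean spaces. -/
def spec {m n : ℕ} (A : Matrix (Fin m) (Fin n) ℝ) : ℝ :=
  ‖LinearMap.toContinuousLinearMap (Matrix.toEuclideanLin A)‖

/-- Centering matrix `C = Iₙ - (1/n)·𝟙𝟙ᵀ`. -/
def centerC (n : ℕ) : Matrix (Fin n) (Fin n) ℝ :=
  1 - (n : ℝ)⁻¹ • Matrix.of (fun _ _ => (1 : ℝ))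

/-- Row-centered matrix `M(X) = X·C`. -/
def centered {m n : ℕ} (X : Matrix (Fin m) (Fin n) ℝ) : Matrix (Fin m) (Fin n) ℝ :=
  X * centerC n

/-- Row standard deviations `σᵢ(X) = sqrt((1/n)·Σⱼ M(X)ᵢⱼ²)`. -/
def rowSigma {m n : ℕ} (X : Matrix (Fin m) (Fin n) ℝ) (i : Fin m) : ℝ :=
  Real.sqrt ((n : ℝ)⁻¹ * ∑ j, centered X i j ^ 2)

/-- `P(X) = diag(σ₁(X),…,σ_m(X))⁻¹`. -/
def Pmat {m n : ℕ} (X : Matrix (Fin m) (Fin n) ℝ) : Matrix (Fin m) (Fin m) ℝ :=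
  Matrix.diagonal fun i => (rowSigma X i)⁻¹

/-- `LayerNorm(X) = P(X)·M(X)`. -/
def layerNorm {m n : ℕ} (X : Matrix (Fin m) (Fin n) ℝ) : Matrix (Fin m) (Fin n) ℝ :=
  Pmat X * centered X

namespace LNaux
variable (m n : ℕ)

def centeredL : Matrix (Fin m) (Fin n) ℝ →ₗ[ℝ] Matrix (Fin m) (Fin n) ℝ where
  toFun Y := Y * centerC n
  map_add' A B := Matrix.add_mul A B _
  map_smul' r A := Matrix.smul_mul r A _

def entryL (i : Fin m) (j : Fin n) : Matrix (Fin m) (Fin n) ℝ →ₗ[ℝ] ℝ where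
  toFun Y := (Y * centerC n) i j
  map_add' A B := by simp [Matrix.add_mul]
  map_smul' r A := by simp [Matrix.smul_mul]

def diagMulL : (Fin m → ℝ) →ₗ[ℝ] Matrix (Fin m) (Fin n) ℝ →ₗ[ℝ] Matrix (Fin m) (Fin n) ℝ where
  toFun d :=
    { toFun := fun M => Matrix.diagonal d * M
      map_add' := fun A B => Matrix.mul_add _ A B
      map_smul' := fun r A => Matrix.mul_smul _ r A }
  map_add' d e := by
    ext M : 1
    show Matrix.diagonal (d + e) * M = Matrix.diagonal d * M + Matrix.diagonal e * M
    rw [show Matrix.diagonal (d + e) = Matrix.diagonal d + Matrix.diagonal e from (Matrix.diagonal_add d e).symm ▸ rfl, Matrix.add_mul]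
  map_smul' r d := by
    ext M : 1
    show Matrix.diagonal (r • d) * M = r • (Matrix.diagonal d * M)
    rw [show Matrix.diagonal (r • d) = r • Matrix.diagonal d from by rw [Matrix.diagonal_smul], Matrix.smul_mul]

def diagMulCLM : (Fin m → ℝ) →ₗ[ℝ] (Matrix (Fin m) (Fin n) ℝ →L[ℝ] Matrix (Fin m) (Fin n) ℝ) where
  toFun d := LinearMap.toContinuousLinearMap (diagMulL m n d)
  map_add' d e := by
    ext M : 1
    simp [map_add]
  map_smul' r d := by
    ext M : 1
    simp [_root_.map_smul]

def b2 : (Fin m → ℝ) →L[ℝ] (Matrix (Fin m) (Fin n) ℝ →L[ℝ] Matrix (Fin m) (Fin n) ℝ) :=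
  LinearMap.toContinuousLinearMap (diagMulCLM m n)

variable {m n} (X : Matrix (Fin m) (Fin n) ℝ)

def gDer : Matrix (Fin m) (Fin n) ℝ →ₗ[ℝ] (Fin m → ℝ) where
  toFun V := fun i => (-(((rowSigma X i) ^ 2)⁻¹ * (((n : ℝ) * rowSigma X i)⁻¹))) *
      ∑ j, centered X i j * (V * centerC n) i j
  map_add' A B := by
    funext i
    simp only [Matrix.add_mul, Matrix.add_apply, Pi.add_apply, mul_add, Finset.sum_add_distrib]
    try ring
  map_smul' r A := by
    funext i
    simp only [Matrix.smul_mul, Matrix.smul_apply, smul_eq_mul, RingHom.id_apply, Pi.smul_apply,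
      Finset.mul_sum]
    ring_nf
    try exact Finset.sum_congr rfl fun j _ => by ring

end LNaux

/-- Jacobian of LayerNorm.  If every row standard deviation of `X` is
positive, then `LayerNorm` is Fréchet differentiable at `X` with derivative
`V ↦ P(X)·(V·C) − P(X)·diag(δ(V))·P(X)·M(X)`, where
`δ(V)ᵢ = (1/(n·σᵢ(X)))·Σⱼ M(X)ᵢⱼ·(V·C)ᵢⱼ`. -/
theorem layerNorm_derivative {m n : ℕ} (X : Matrix (Fin m) (Fin n) ℝ)
    (hσ : ∀ i, 0 < rowSigma X i) :
    DifferentiableAt ℝ (fun Y : Matrix (Fin m) (Fin n) ℝ => layerNorm Y) X ∧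
    ∀ V : Matrix (Fin m) (Fin n) ℝ,
      fderiv ℝ (fun Y : Matrix (Fin m) (Fin n) ℝ => layerNorm Y) X V =
        Pmat X * (V * centerC n) -
          Pmat X *
            Matrix.diagonal (fun i =>
              ((n : ℝ) * rowSigma X i)⁻¹ * ∑ j, centered X i j * (V * centerC n) i j) *
            Pmat X * centered X := by
  classical
  let Lc : Matrix (Fin m) (Fin n) ℝ →L[ℝ] Matrix (Fin m) (Fin n) ℝ :=
    LinearMap.toContinuousLinearMap (LNaux.centeredL m n)
  let gc : Matrix (Fin m) (Fin n) ℝ →L[ℝ] (Fin m → ℝ) :=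
    LinearMap.toContinuousLinearMap (LNaux.gDer X)
  have hM : HasFDerivAt (fun Y : Matrix (Fin m) (Fin n) ℝ => centered Y) Lc X :=
    Lc.hasFDerivAt
  have hg : HasFDerivAt (fun Y : Matrix (Fin m) (Fin n) ℝ => fun i => (rowSigma Y i)⁻¹) gc X := by
    apply hasFDerivAt_pi''
    intro i
    have hσi := hσ i
    have hσne : rowSigma X i ≠ 0 := ne_of_gt hσi
    have hq0 : (0:ℝ) < (n : ℝ)⁻¹ * ∑ j, centered X i j ^ 2 := Real.sqrt_pos.mp hσi
    have h1 : ∀ j : Fin n, HasFDerivAt (fun Y : Matrix (Fin m) (Fin n) ℝ => centered Y i j)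
        (LinearMap.toContinuousLinearMap (LNaux.entryL m n i j)) X :=
      fun j => (LinearMap.toContinuousLinearMap (LNaux.entryL m n i j)).hasFDerivAt
    have hsq : ∀ j : Fin n, HasFDerivAt (fun Y : Matrix (Fin m) (Fin n) ℝ => centered Y i j ^ 2)
        (centered X i j • LinearMap.toContinuousLinearMap (LNaux.entryL m n i j)
          + centered X i j • LinearMap.toContinuousLinearMap (LNaux.entryL m n i j)) X := by
      intro j
      have h := (h1 j).fun_mul (h1 j)
      simp only [← sq] at h
      exact h
    have hsum := HasFDerivAt.fun_sum (u := Finset.univ) fun j _ => hsq j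
    have hq := hsum.const_mul ((n : ℝ)⁻¹)
    have hφ : HasDerivAt (fun t : ℝ => (Real.sqrt t)⁻¹)
        (-(Real.sqrt ((n : ℝ)⁻¹ * ∑ j, centered X i j ^ 2) ^ 2)⁻¹ *
          (1 / (2 * Real.sqrt ((n : ℝ)⁻¹ * ∑ j, centered X i j ^ 2))))
        ((n : ℝ)⁻¹ * ∑ j, centered X i j ^ 2) :=
      (hasDerivAt_inv (by exact hσne)).comp _ (Real.hasDerivAt_sqrt (ne_of_gt hq0))
    have hchain := hφ.comp_hasFDerivAt X hq
    have hchain' : HasFDerivAt (fun Y : Matrix (Fin m) (Fin n) ℝ => (rowSigma Y i)⁻¹)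
        ((-(Real.sqrt ((n : ℝ)⁻¹ * ∑ j, centered X i j ^ 2) ^ 2)⁻¹ *
          (1 / (2 * Real.sqrt ((n : ℝ)⁻¹ * ∑ j, centered X i j ^ 2)))) •
          ((n : ℝ)⁻¹ • ∑ j : Fin n,
            (centered X i j • LinearMap.toContinuousLinearMap (LNaux.entryL m n i j)
              + centered X i j • LinearMap.toContinuousLinearMap (LNaux.entryL m n i j)))) X :=
      hchain
    refine hchain'.congr_fderiv ?_
    symm
    ext V
    change gc V i = _
    have hR : ((-(Real.sqrt ((n : ℝ)⁻¹ * ∑ j, centered X i j ^ 2) ^ 2)⁻¹ *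
          (1 / (2 * Real.sqrt ((n : ℝ)⁻¹ * ∑ j, centered X i j ^ 2)))) •
          ((n : ℝ)⁻¹ • ∑ j : Fin n,
            (centered X i j • LinearMap.toContinuousLinearMap (LNaux.entryL m n i j)
              + centered X i j • LinearMap.toContinuousLinearMap (LNaux.entryL m n i j)))) V
        = (-(Real.sqrt ((n : ℝ)⁻¹ * ∑ j, centered X i j ^ 2) ^ 2)⁻¹ *
          (1 / (2 * Real.sqrt ((n : ℝ)⁻¹ * ∑ j, centered X i j ^ 2)))) * ((n : ℝ)⁻¹ * ∑ j : Fin n,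
            (centered X i j * (V * centerC n) i j + centered X i j * (V * centerC n) i j)) := by
      simp only [ContinuousLinearMap.coe_smul', ContinuousLinearMap.coe_sum',
        ContinuousLinearMap.coe_add', Pi.smul_apply, Finset.sum_apply, Pi.add_apply,
        LinearMap.coe_toContinuousLinearMap', LNaux.entryL, LinearMap.coe_mk, AddHom.coe_mk, smul_eq_mul]
    refine Eq.trans ?_ hR.symm
    have hS : ∑ j : Fin n,
        (centered X i j * (V * centerC n) i j + centered X i j * (V * centerC n) i j)
        = 2 * ∑ j, centered X i j * (V * centerC n) i j := by
      rw [Finset.mul_sum]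
      exact Finset.sum_congr rfl fun j _ => (two_mul _).symm
    have hsig : Real.sqrt ((n : ℝ)⁻¹ * ∑ j, centered X i j ^ 2) = rowSigma X i := rfl
    simp only [ContinuousLinearMap.comp_apply, ContinuousLinearMap.proj_apply,
      ContinuousLinearMap.smul_apply, ContinuousLinearMap.sum_apply,
      ContinuousLinearMap.add_apply, LinearMap.coe_toContinuousLinearMap,
      LNaux.gDer, LNaux.entryL, LinearMap.coe_mk, AddHom.coe_mk, smul_eq_mul,
      Finset.sum_add_distrib, hsig, LinearMap.coe_toContinuousLinearMap']
    have hgc : gc V i = (-(((rowSigma X i) ^ 2)⁻¹ * (((n : ℝ) * rowSigma X i)⁻¹))) *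
        ∑ j, centered X i j * (V * centerC n) i j := rfl
    rw [hgc]
    rw [show (∑ x : Fin n, centered X i x * (V * centerC n) i x)
          + ∑ x : Fin n, centered X i x * (V * centerC n) i x
        = 2 * ∑ j, centered X i j * (V * centerC n) i j from (two_mul _).symm]
    have hn : (0:ℝ) < (n:ℝ)⁻¹ * ∑ j, centered X i j ^ 2 := hq0
    have hnn : (n:ℝ) ≠ 0 := by
      intro h
      rw [h] at hn
      simp at hn
    field_simp
  have hpair := hg.prodMk hM
  have hbil := ((LNaux.b2 m n).isBoundedBilinearMap).hasFDerivAt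
      ((fun i => (rowSigma X i)⁻¹), centered X)
  have hF := hbil.comp X hpair
  have hLN : HasFDerivAt (fun Y : Matrix (Fin m) (Fin n) ℝ => layerNorm Y)
      ((((LNaux.b2 m n).isBoundedBilinearMap).deriv
        ((fun i => (rowSigma X i)⁻¹), centered X)).comp (gc.prod Lc)) X := hF
  refine ⟨hLN.differentiableAt, fun V => ?_⟩
  erw [hLN.fderiv]
  change ((((LNaux.b2 m n).isBoundedBilinearMap).deriv
      ((fun i => (rowSigma X i)⁻¹), centered X)).comp (gc.prod Lc)) V = _
  simp only [ContinuousLinearMap.comp_apply, ContinuousLinearMap.prod_apply,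
    IsBoundedBilinearMap.deriv_apply]
  change (LNaux.b2 m n) (fun i => (rowSigma X i)⁻¹) (Lc V) + (LNaux.b2 m n) (gc V) (centered X) = _
  have e1 : (LNaux.b2 m n) (fun i => (rowSigma X i)⁻¹) (Lc V) = Pmat X * (V * centerC n) := rfl
  have e2 : (LNaux.b2 m n) (gc V) (centered X)
      = Matrix.diagonal (fun i => (-(((rowSigma X i) ^ 2)⁻¹ * (((n : ℝ) * rowSigma X i)⁻¹))) *
          ∑ j, centered X i j * (V * centerC n) i j) * centered X := rfl
  rw [e1, e2]
  ext i j
  have hσne : rowSigma X i ≠ 0 := ne_of_gt (hσ i)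
  simp only [Pmat, Matrix.diagonal_mul_diagonal, Matrix.sub_apply, Matrix.add_apply,
    Matrix.diagonal_mul]
  field_simp
  ring
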